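/- Let Ψ_v be the filter x_v'(t)=A₁(t)x_v(t)+B₁(t)v(t), z_v(t)=C₁(t)x_v(t)+D₁(t)v(t) and Ψ_w the filter x_w'(t)=A₂(t)x_w(t)+B₂(t)w(t), z_w(t)=C₂(t)x_w(t)+D₂(t)w(t) on [0,T], with continuous coefficients and D₁(t), D₂(t) of full column rank. Let M_v:[0,T]→S^{n_{z_v}} and M_w:[0,T]→S^{n_{z_w}} be continuous and positive definite for all t. Let X_v be a continuously differentiable solution of X_v'+A₁ᵀX_v+X_vA₁+C₁ᵀM_vC₁−(X_vB₁+C₁ᵀM_vD₁)(D₁ᵀM_vD₁)⁻¹(X_vB₁+C₁ᵀM_vD₁)ᵀ=0 with X_v(T)=0, and X_w the analogous solution for (A₂,B₂,C₂,D₂,M_w) with X_w(T)=0; let W_v, W_w be continuous with W_vᵀW_v=D₁ᵀM_vD₁, W_wᵀW_w=D₂ᵀM_wD₂, and define ṽ(t):=W_v(t)⁻ᵀ(B₁(t)ᵀX_v(t)+D₁(t)ᵀM_v(t)C₁(t))x_v(t)+W_v(t)v(t) and w̃(t):=W_w(t)⁻ᵀ(B₂(t)ᵀX_w(t)+D₂(t)ᵀM_w(t)C₂(t))x_w(t)+W_w(t)w(t).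 Then for all continuous inputs v, w with x_v(0)=0 and x_w(0)=0: ∫₀ᵀ ( z_v(t)ᵀM_v(t)z_v(t) − z_w(t)ᵀM_w(t)z_w(t) ) dt = ∫₀ᵀ ( ‖ṽ(t)‖² − ‖w̃(t)‖² ) dt. In particular, if the IQC ∫₀ᵀ z(t)ᵀM(t)z(t) dt ≥ 0 holds for z:=(z_v,z_w) and M:=diag(M_v, −M_w), then ∫₀ᵀ(‖ṽ(t)‖² − ‖w̃(t)‖²) dt ≥ 0, i.e., the factored pair (U, diag(I_{n_v}, −I_{n_w})) also defines a valid time-domain integral quadratic constraint. -/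

import Mathlib

open Matrix Set


lemma dp_mv {n m p : ℕ} (P : Matrix (Fin p) (Fin n) ℝ) (Q : Matrix (Fin p) (Fin m) ℝ)
    (u : Fin n → ℝ) (w : Fin m → ℝ) :
    (P *ᵥ u) ⬝ᵥ (Q *ᵥ w) = u ⬝ᵥ ((Pᵀ * Q) *ᵥ w) := by
  rw [← mulVec_mulVec, dotProduct_mulVec u, vecMul_transpose, dotProduct_mulVec]

lemma pointwise_alg {n m p : ℕ}
    (A : Matrix (Fin n) (Fin n) ℝ) (B : Matrix (Fin n) (Fin m) ℝ)
    (C : Matrix (Fin p) (Fin n) ℝ) (D : Matrix (Fin p) (Fin m) ℝ)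
    (M : Matrix (Fin p) (Fin p) ℝ) (X X' : Matrix (Fin n) (Fin n) ℝ)
    (W : Matrix (Fin m) (Fin m) ℝ)
    (hM : Mᵀ = M) (hX : Xᵀ = X) (hW : Wᵀ * W = Dᵀ * M * D) (hWdet : IsUnit W.det)
    (hRDE : X' + Aᵀ * X + X * A + Cᵀ * M * C -
      (X * B + Cᵀ * M * D) * (Dᵀ * M * D)⁻¹ * (X * B + Cᵀ * M * D)ᵀ = 0)
    (x : Fin n → ℝ) (v : Fin m → ℝ) :
    ((Wᵀ)⁻¹ *ᵥ ((Bᵀ * X + Dᵀ * M * C) *ᵥ x) + W *ᵥ v) ⬝ᵥ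
      ((Wᵀ)⁻¹ *ᵥ ((Bᵀ * X + Dᵀ * M * C) *ᵥ x) + W *ᵥ v)
    = (C *ᵥ x + D *ᵥ v) ⬝ᵥ (M *ᵥ (C *ᵥ x + D *ᵥ v))
      + ((A *ᵥ x + B *ᵥ v) ⬝ᵥ (X *ᵥ x) + x ⬝ᵥ (X' *ᵥ x)
         + x ⬝ᵥ (X *ᵥ (A *ᵥ x + B *ᵥ v))) := by
  set L : Matrix (Fin m) (Fin n) ℝ := Bᵀ * X + Dᵀ * M * C with hL
  have hLt : Lᵀ = X * B + Cᵀ * M * D := by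
    simp [hL, transpose_add, transpose_mul, hM, hX, Matrix.mul_assoc]
  have hWtdet : IsUnit (Wᵀ).det := by rwa [det_transpose]
  have hWinv : (Wᵀ)⁻¹ᵀ = W⁻¹ := by rw [transpose_nonsing_inv, transpose_transpose]
  have hRinv : W⁻¹ * (Wᵀ)⁻¹ = (Dᵀ * M * D)⁻¹ := by rw [← Matrix.mul_inv_rev, hW]
  have hWW : Wᵀ * (Wᵀ)⁻¹ = 1 := Matrix.mul_nonsing_inv _ hWtdet
  have hWW2 : W⁻¹ * W = 1 := Matrix.nonsing_inv_mul _ hWdet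
  have hQuad : X' + Aᵀ * X + X * A + Cᵀ * M * C = Lᵀ * (Dᵀ * M * D)⁻¹ * L := by
    have h0 := sub_eq_zero.mp hRDE
    rw [h0, ← hLt, transpose_transpose]
  simp only [mulVec_mulVec, mulVec_add, dotProduct_add, add_dotProduct, dp_mv]
  have e1 : (Wᵀ⁻¹ * L)ᵀ * (Wᵀ⁻¹ * L) = Lᵀ * ((Dᵀ * M * D)⁻¹ * L) := by
    rw [transpose_mul, hWinv, Matrix.mul_assoc, ← Matrix.mul_assoc W⁻¹, hRinv]
  have e2 : Wᵀ * (Wᵀ⁻¹ * L) = L := by rw [← Matrix.mul_assoc, hWW, Matrix.one_mul]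
  have e3 : (Wᵀ⁻¹ * L)ᵀ * W = Lᵀ := by
    rw [transpose_mul, hWinv, Matrix.mul_assoc, hWW2, Matrix.mul_one]
  rw [e1, e2, e3, hW]
  have g1 : x ⬝ᵥ (Lᵀ * ((Dᵀ * M * D)⁻¹ * L)) *ᵥ x
      = x ⬝ᵥ (Cᵀ * (M * C)) *ᵥ x + x ⬝ᵥ (Aᵀ * X) *ᵥ x + x ⬝ᵥ X' *ᵥ x + x ⬝ᵥ (X * A) *ᵥ x := by
    have hm : Lᵀ * ((Dᵀ * M * D)⁻¹ * L) = Cᵀ * (M * C) + Aᵀ * X + X' + X * A := by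
      rw [← Matrix.mul_assoc, ← hQuad]; rw [← Matrix.mul_assoc]; abel
    rw [hm]; simp [Matrix.add_mulVec, dotProduct_add]
  have g2 : v ⬝ᵥ L *ᵥ x = v ⬝ᵥ (Dᵀ * (M * C)) *ᵥ x + v ⬝ᵥ (Bᵀ * X) *ᵥ x := by
    have hm : L = Dᵀ * (M * C) + Bᵀ * X := by rw [hL]; rw [← Matrix.mul_assoc]; abel
    rw [hm]; simp [Matrix.add_mulVec, dotProduct_add]
  have g3 : x ⬝ᵥ Lᵀ *ᵥ v = x ⬝ᵥ (Cᵀ * (M * D)) *ᵥ v + x ⬝ᵥ (X * B) *ᵥ v := by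
    have hm : Lᵀ = Cᵀ * (M * D) + X * B := by rw [hLt]; rw [← Matrix.mul_assoc]; abel
    rw [hm]; simp [Matrix.add_mulVec, dotProduct_add]
  have g4 : v ⬝ᵥ (Dᵀ * M * D) *ᵥ v = v ⬝ᵥ (Dᵀ * (M * D)) *ᵥ v := by rw [Matrix.mul_assoc]
  rw [g1, g2, g3, g4]; ring

lemma W_det_isUnit {m p : ℕ} (D : Matrix (Fin p) (Fin m) ℝ) (M : Matrix (Fin p) (Fin p) ℝ)
    (W : Matrix (Fin m) (Fin m) ℝ)
    (hD : ∀ u : Fin m → ℝ, D *ᵥ u = 0 → u = 0)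
    (hM : ∀ z : Fin p → ℝ, z ≠ 0 → 0 < z ⬝ᵥ (M *ᵥ z))
    (hW : Wᵀ * W = Dᵀ * M * D) : IsUnit W.det := by
  rw [isUnit_iff_ne_zero]
  intro hdet
  obtain ⟨u, hu, hWu⟩ := (Matrix.exists_mulVec_eq_zero_iff).mpr hdet
  have hDu : D *ᵥ u ≠ 0 := fun h => hu (hD u h)
  have hpos := hM _ hDu
  have h1 : (W *ᵥ u) ⬝ᵥ (W *ᵥ u) = (D *ᵥ u) ⬝ᵥ (M *ᵥ (D *ᵥ u)) :=
    calc (W *ᵥ u) ⬝ᵥ (W *ᵥ u) = u ⬝ᵥ ((Wᵀ * W) *ᵥ u) := dp_mv W W u u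
    _ = u ⬝ᵥ ((Dᵀ * M) *ᵥ (D *ᵥ u)) := by rw [hW, mulVec_mulVec, Matrix.mul_assoc]
    _ = (D *ᵥ u) ⬝ᵥ (M *ᵥ (D *ᵥ u)) := (dp_mv D M u (D *ᵥ u)).symm
  rw [hWu, zero_dotProduct] at h1
  rw [← h1] at hpos
  exact lt_irrefl _ hpos

-- derivative of t ↦ x t ⬝ᵥ (X t *ᵥ x t)
lemma deriv_quad {n : ℕ} (X X' : ℝ → Matrix (Fin n) (Fin n) ℝ) (x x' : ℝ → Fin n → ℝ)
    (t : ℝ)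
    (hX : ∀ i j, HasDerivAt (fun s => X s i j) (X' t i j) t)
    (hx : ∀ i, HasDerivAt (fun s => x s i) (x' t i) t) :
    HasDerivAt (fun s => x s ⬝ᵥ (X s *ᵥ x s))
      (x' t ⬝ᵥ (X t *ᵥ x t) + x t ⬝ᵥ (X' t *ᵥ x t) + x t ⬝ᵥ (X t *ᵥ x' t)) t := by
  have h1 : ∀ i : Fin n, HasDerivAt (fun s => x s i * ∑ j, X s i j * x s j)
      (x' t i * (X t *ᵥ x t) i + x t i * ((X' t *ᵥ x t) i + (X t *ᵥ x' t) i)) t := by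
    intro i
    have h2 : HasDerivAt (fun s => ∑ j, X s i j * x s j)
        ((X' t *ᵥ x t) i + (X t *ᵥ x' t) i) t := by
      have := HasDerivAt.fun_sum (u := Finset.univ)
        (A := fun j s => X s i j * x s j)
        (A' := fun j => X' t i j * x t j + X t i j * x' t j)
        (fun j _ => (hX i j).mul (hx j))
      refine this.congr_deriv ?_
      simp [mulVec, dotProduct, Finset.sum_add_distrib]
    exact (hx i).mul h2
  have heq : (fun s => x s ⬝ᵥ (X s *ᵥ x s))
      = fun s => ∑ i, x s i * ∑ j, X s i j * x s j := by
    funext s; simp [dotProduct, mulVec]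
  have hval : x' t ⬝ᵥ (X t *ᵥ x t) + x t ⬝ᵥ (X' t *ᵥ x t) + x t ⬝ᵥ (X t *ᵥ x' t)
      = ∑ i, (x' t i * (X t *ᵥ x t) i + x t i * ((X' t *ᵥ x t) i + (X t *ᵥ x' t) i)) := by
    simp [dotProduct, Finset.sum_add_distrib, mul_add]; ring
  rw [heq, hval]
  exact HasDerivAt.fun_sum (fun i _ => h1 i)

lemma contOn_mulVec {n m : ℕ} {s : Set ℝ} {Mf : ℝ → Matrix (Fin n) (Fin m) ℝ}
    {u : ℝ → Fin m → ℝ} (hM : ∀ i j, ContinuousOn (fun t => Mf t i j) s)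
    (hu : ∀ i, ContinuousOn (fun t => u t i) s) (i : Fin n) :
    ContinuousOn (fun t => (Mf t *ᵥ u t) i) s := by
  simp only [mulVec, dotProduct]
  exact continuousOn_finset_sum _ (fun j _ => (hM i j).mul (hu j))

lemma contOn_dot {m : ℕ} {s : Set ℝ} {u w : ℝ → Fin m → ℝ}
    (hu : ∀ i, ContinuousOn (fun t => u t i) s)
    (hw : ∀ i, ContinuousOn (fun t => w t i) s) :
    ContinuousOn (fun t => u t ⬝ᵥ w t) s := by
  simp only [dotProduct]
  exact continuousOn_finset_sum _ (fun i _ => (hu i).mul (hw i))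

lemma single_filter {n m p : ℕ} {T : ℝ} (hT : 0 < T)
    (A : ℝ → Matrix (Fin n) (Fin n) ℝ) (B : ℝ → Matrix (Fin n) (Fin m) ℝ)
    (C : ℝ → Matrix (Fin p) (Fin n) ℝ) (D : ℝ → Matrix (Fin p) (Fin m) ℝ)
    (hA : ∀ i j, ContinuousOn (fun t => A t i j) (Icc 0 T))
    (hB : ∀ i j, ContinuousOn (fun t => B t i j) (Icc 0 T))
    (hDrank : ∀ t ∈ Icc (0:ℝ) T, ∀ u : Fin m → ℝ, D t *ᵥ u = 0 → u = 0)
    (M : ℝ → Matrix (Fin p) (Fin p) ℝ)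
    (hMsym : ∀ t ∈ Icc (0:ℝ) T, (M t)ᵀ = M t)
    (hMpd : ∀ t ∈ Icc (0:ℝ) T, ∀ z : Fin p → ℝ, z ≠ 0 → 0 < z ⬝ᵥ (M t *ᵥ z))
    (X X' : ℝ → Matrix (Fin n) (Fin n) ℝ)
    (hXsym : ∀ t ∈ Icc (0:ℝ) T, (X t)ᵀ = X t)
    (hXderiv : ∀ t ∈ Icc (0:ℝ) T, ∀ i j, HasDerivAt (fun s => X s i j) (X' t i j) t)
    (hX'cont : ∀ i j, ContinuousOn (fun t => X' t i j) (Icc 0 T))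
    (hXT : X T = 0)
    (hRDE : ∀ t ∈ Icc (0:ℝ) T,
      X' t + (A t)ᵀ * X t + X t * A t + (C t)ᵀ * M t * C t -
        (X t * B t + (C t)ᵀ * M t * D t) * ((D t)ᵀ * M t * D t)⁻¹ *
          (X t * B t + (C t)ᵀ * M t * D t)ᵀ = 0)
    (W : ℝ → Matrix (Fin m) (Fin m) ℝ)
    (hW : ∀ t ∈ Icc (0:ℝ) T, (W t)ᵀ * W t = (D t)ᵀ * M t * D t)
    (v : ℝ → Fin m → ℝ) (x : ℝ → Fin n → ℝ)
    (hv : ∀ i, ContinuousOn (fun t => v t i) (Icc 0 T))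
    (hx0 : x 0 = 0)
    (hxd : ∀ t ∈ Icc (0:ℝ) T, ∀ i,
      HasDerivAt (fun s => x s i) ((A t *ᵥ x t + B t *ᵥ v t) i) t) :
    ∃ g : ℝ → ℝ, ContinuousOn g (Icc 0 T) ∧ (∫ t in (0:ℝ)..T, g t) = 0 ∧
      ∀ t ∈ Icc (0:ℝ) T,
        (((W t)ᵀ)⁻¹ *ᵥ (((B t)ᵀ * X t + (D t)ᵀ * M t * C t) *ᵥ x t) + W t *ᵥ v t) ⬝ᵥ
          (((W t)ᵀ)⁻¹ *ᵥ (((B t)ᵀ * X t + (D t)ᵀ * M t * C t) *ᵥ x t) + W t *ᵥ v t)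
        = (C t *ᵥ x t + D t *ᵥ v t) ⬝ᵥ (M t *ᵥ (C t *ᵥ x t + D t *ᵥ v t)) + g t := by
  set x' : ℝ → Fin n → ℝ := fun t => A t *ᵥ x t + B t *ᵥ v t with hx'
  refine ⟨fun t => x' t ⬝ᵥ (X t *ᵥ x t) + x t ⬝ᵥ (X' t *ᵥ x t) + x t ⬝ᵥ (X t *ᵥ x' t),
    ?_, ?_, ?_⟩
  case _ =>
    have hxc : ∀ i, ContinuousOn (fun t => x t i) (Icc 0 T) :=
      fun i t ht => ((hxd t ht i).continuousAt).continuousWithinAt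
    have hXc : ∀ i j, ContinuousOn (fun t => X t i j) (Icc 0 T) :=
      fun i j t ht => ((hXderiv t ht i j).continuousAt).continuousWithinAt
    have hx'c : ∀ i, ContinuousOn (fun t => x' t i) (Icc 0 T) := by
      intro i
      have : (fun t => x' t i) = fun t => (A t *ᵥ x t) i + (B t *ᵥ v t) i := by
        funext t; simp [hx']
      rw [this]
      exact (contOn_mulVec hA hxc i).add (contOn_mulVec hB hv i)
    exact ((contOn_dot hx'c (contOn_mulVec hXc hxc)).add
      (contOn_dot hxc (contOn_mulVec hX'cont hxc))).add
      (contOn_dot hxc (contOn_mulVec hXc hx'c))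
  case _ =>
    have huIcc : uIcc (0:ℝ) T = Icc 0 T := uIcc_of_le hT.le
    have hxc : ∀ i, ContinuousOn (fun t => x t i) (Icc 0 T) :=
      fun i t ht => ((hxd t ht i).continuousAt).continuousWithinAt
    have hXc : ∀ i j, ContinuousOn (fun t => X t i j) (Icc 0 T) :=
      fun i j t ht => ((hXderiv t ht i j).continuousAt).continuousWithinAt
    have hx'c : ∀ i, ContinuousOn (fun t => x' t i) (Icc 0 T) := by
      intro i
      have : (fun t => x' t i) = fun t => (A t *ᵥ x t) i + (B t *ᵥ v t) i := by
        funext t; simp [hx']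
      rw [this]
      exact (contOn_mulVec hA hxc i).add (contOn_mulVec hB hv i)
    have hgc : ContinuousOn
        (fun t => x' t ⬝ᵥ (X t *ᵥ x t) + x t ⬝ᵥ (X' t *ᵥ x t) + x t ⬝ᵥ (X t *ᵥ x' t))
        (Icc 0 T) :=
      ((contOn_dot hx'c (contOn_mulVec hXc hxc)).add
        (contOn_dot hxc (contOn_mulVec hX'cont hxc))).add
        (contOn_dot hxc (contOn_mulVec hXc hx'c))
    have key := intervalIntegral.integral_eq_sub_of_hasDerivAt
      (f := fun t => x t ⬝ᵥ (X t *ᵥ x t))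
      (f' := fun t => x' t ⬝ᵥ (X t *ᵥ x t) + x t ⬝ᵥ (X' t *ᵥ x t) + x t ⬝ᵥ (X t *ᵥ x' t))
      (fun t ht => deriv_quad X X' x x' t (hXderiv t (huIcc ▸ ht)) (hxd t (huIcc ▸ ht)))
      (ContinuousOn.intervalIntegrable (huIcc ▸ hgc))
    rw [key]
    rw [hXT, hx0]
    simp
  case _ =>
    intro t ht
    exact pointwise_alg (A t) (B t) (C t) (D t) (M t) (X t) (X' t) (W t)
      (hMsym t ht) (hXsym t ht) (hW t ht)
      (W_det_isUnit (D t) (M t) (W t) (hDrank t ht) (hMpd t ht) (hW t ht))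
      (hRDE t ht) (x t) (v t)

/-- time-varying factorization of a block-diagonal IQC:
`∫ (z_vᵀM_v z_v - z_wᵀM_w z_w) dt = ∫ (‖ṽ‖² - ‖w̃‖²) dt` for zero initial filter
states; in particular a valid IQC for `(Ψ, diag(M_v,-M_w))` yields a valid IQC for
the factored pair `(U, diag(I,-I))`. -/
theorem iqc_factorization_identity
    {n1 n2 nv nw nzv nzw : ℕ} {T : ℝ} (hT : 0 < T)
    (A1 : ℝ → Matrix (Fin n1) (Fin n1) ℝ) (B1 : ℝ → Matrix (Fin n1) (Fin nv) ℝ)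
    (C1 : ℝ → Matrix (Fin nzv) (Fin n1) ℝ) (D1 : ℝ → Matrix (Fin nzv) (Fin nv) ℝ)
    (A2 : ℝ → Matrix (Fin n2) (Fin n2) ℝ) (B2 : ℝ → Matrix (Fin n2) (Fin nw) ℝ)
    (C2 : ℝ → Matrix (Fin nzw) (Fin n2) ℝ) (D2 : ℝ → Matrix (Fin nzw) (Fin nw) ℝ)
    (hA1 : ∀ i j, ContinuousOn (fun t => A1 t i j) (Icc 0 T))
    (hB1 : ∀ i j, ContinuousOn (fun t => B1 t i j) (Icc 0 T))
    (hC1 : ∀ i j, ContinuousOn (fun t => C1 t i j) (Icc 0 T))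
    (hD1 : ∀ i j, ContinuousOn (fun t => D1 t i j) (Icc 0 T))
    (hA2 : ∀ i j, ContinuousOn (fun t => A2 t i j) (Icc 0 T))
    (hB2 : ∀ i j, ContinuousOn (fun t => B2 t i j) (Icc 0 T))
    (hC2 : ∀ i j, ContinuousOn (fun t => C2 t i j) (Icc 0 T))
    (hD2 : ∀ i j, ContinuousOn (fun t => D2 t i j) (Icc 0 T))
    (hD1rank : ∀ t ∈ Icc (0:ℝ) T, ∀ v : Fin nv → ℝ, D1 t *ᵥ v = 0 → v = 0)
    (hD2rank : ∀ t ∈ Icc (0:ℝ) T, ∀ v : Fin nw → ℝ, D2 t *ᵥ v = 0 → v = 0)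
    (Mv : ℝ → Matrix (Fin nzv) (Fin nzv) ℝ) (Mw : ℝ → Matrix (Fin nzw) (Fin nzw) ℝ)
    (hMvcont : ∀ i j, ContinuousOn (fun t => Mv t i j) (Icc 0 T))
    (hMwcont : ∀ i j, ContinuousOn (fun t => Mw t i j) (Icc 0 T))
    (hMvsym : ∀ t ∈ Icc (0:ℝ) T, (Mv t)ᵀ = Mv t)
    (hMwsym : ∀ t ∈ Icc (0:ℝ) T, (Mw t)ᵀ = Mw t)
    (hMvpd : ∀ t ∈ Icc (0:ℝ) T, ∀ v : Fin nzv → ℝ, v ≠ 0 → 0 < v ⬝ᵥ (Mv t *ᵥ v))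
    (hMwpd : ∀ t ∈ Icc (0:ℝ) T, ∀ v : Fin nzw → ℝ, v ≠ 0 → 0 < v ⬝ᵥ (Mw t *ᵥ v))
    -- Riccati solutions for the two factorizations
    (Xv Xv' : ℝ → Matrix (Fin n1) (Fin n1) ℝ)
    (hXvsym : ∀ t ∈ Icc (0:ℝ) T, (Xv t)ᵀ = Xv t)
    (hXvderiv : ∀ t ∈ Icc (0:ℝ) T, ∀ i j, HasDerivAt (fun s => Xv s i j) (Xv' t i j) t)
    (hXv'cont : ∀ i j, ContinuousOn (fun t => Xv' t i j) (Icc 0 T))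
    (hXvT : Xv T = 0)
    (hXvRDE : ∀ t ∈ Icc (0:ℝ) T,
      Xv' t + (A1 t)ᵀ * Xv t + Xv t * A1 t + (C1 t)ᵀ * Mv t * C1 t -
        (Xv t * B1 t + (C1 t)ᵀ * Mv t * D1 t) * ((D1 t)ᵀ * Mv t * D1 t)⁻¹ *
          (Xv t * B1 t + (C1 t)ᵀ * Mv t * D1 t)ᵀ = 0)
    (Xw Xw' : ℝ → Matrix (Fin n2) (Fin n2) ℝ)
    (hXwsym : ∀ t ∈ Icc (0:ℝ) T, (Xw t)ᵀ = Xw t)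
    (hXwderiv : ∀ t ∈ Icc (0:ℝ) T, ∀ i j, HasDerivAt (fun s => Xw s i j) (Xw' t i j) t)
    (hXw'cont : ∀ i j, ContinuousOn (fun t => Xw' t i j) (Icc 0 T))
    (hXwT : Xw T = 0)
    (hXwRDE : ∀ t ∈ Icc (0:ℝ) T,
      Xw' t + (A2 t)ᵀ * Xw t + Xw t * A2 t + (C2 t)ᵀ * Mw t * C2 t -
        (Xw t * B2 t + (C2 t)ᵀ * Mw t * D2 t) * ((D2 t)ᵀ * Mw t * D2 t)⁻¹ *
          (Xw t * B2 t + (C2 t)ᵀ * Mw t * D2 t)ᵀ = 0)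
    -- square root factors
    (Wv : ℝ → Matrix (Fin nv) (Fin nv) ℝ) (Ww : ℝ → Matrix (Fin nw) (Fin nw) ℝ)
    (hWvcont : ∀ i j, ContinuousOn (fun t => Wv t i j) (Icc 0 T))
    (hWwcont : ∀ i j, ContinuousOn (fun t => Ww t i j) (Icc 0 T))
    (hWv : ∀ t ∈ Icc (0:ℝ) T, (Wv t)ᵀ * Wv t = (D1 t)ᵀ * Mv t * D1 t)
    (hWw : ∀ t ∈ Icc (0:ℝ) T, (Ww t)ᵀ * Ww t = (D2 t)ᵀ * Mw t * D2 t) :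
    ∀ (v : ℝ → Fin nv → ℝ) (w : ℝ → Fin nw → ℝ)
      (xv : ℝ → Fin n1 → ℝ) (xw : ℝ → Fin n2 → ℝ),
      (∀ i, ContinuousOn (fun t => v t i) (Icc 0 T)) →
      (∀ i, ContinuousOn (fun t => w t i) (Icc 0 T)) →
      xv 0 = 0 → xw 0 = 0 →
      (∀ t ∈ Icc (0:ℝ) T, ∀ i,
        HasDerivAt (fun s => xv s i) ((A1 t *ᵥ xv t + B1 t *ᵥ v t) i) t) →
      (∀ t ∈ Icc (0:ℝ) T, ∀ i,
        HasDerivAt (fun s => xw s i) ((A2 t *ᵥ xw t + B2 t *ᵥ w t) i) t) →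
      ((∫ t in (0:ℝ)..T,
          ((C1 t *ᵥ xv t + D1 t *ᵥ v t) ⬝ᵥ (Mv t *ᵥ (C1 t *ᵥ xv t + D1 t *ᵥ v t)) -
           (C2 t *ᵥ xw t + D2 t *ᵥ w t) ⬝ᵥ (Mw t *ᵥ (C2 t *ᵥ xw t + D2 t *ᵥ w t)))) =
        ∫ t in (0:ℝ)..T,
          ((((Wv t)ᵀ)⁻¹ *ᵥ (((B1 t)ᵀ * Xv t + (D1 t)ᵀ * Mv t * C1 t) *ᵥ xv t) +
              Wv t *ᵥ v t) ⬝ᵥ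
           (((Wv t)ᵀ)⁻¹ *ᵥ (((B1 t)ᵀ * Xv t + (D1 t)ᵀ * Mv t * C1 t) *ᵥ xv t) +
              Wv t *ᵥ v t) -
           (((Ww t)ᵀ)⁻¹ *ᵥ (((B2 t)ᵀ * Xw t + (D2 t)ᵀ * Mw t * C2 t) *ᵥ xw t) +
              Ww t *ᵥ w t) ⬝ᵥ
           (((Ww t)ᵀ)⁻¹ *ᵥ (((B2 t)ᵀ * Xw t + (D2 t)ᵀ * Mw t * C2 t) *ᵥ xw t) +
              Ww t *ᵥ w t))) ∧
      ((0 ≤ ∫ t in (0:ℝ)..T,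
          ((C1 t *ᵥ xv t + D1 t *ᵥ v t) ⬝ᵥ (Mv t *ᵥ (C1 t *ᵥ xv t + D1 t *ᵥ v t)) -
           (C2 t *ᵥ xw t + D2 t *ᵥ w t) ⬝ᵥ (Mw t *ᵥ (C2 t *ᵥ xw t + D2 t *ᵥ w t)))) →
        0 ≤ ∫ t in (0:ℝ)..T,
          ((((Wv t)ᵀ)⁻¹ *ᵥ (((B1 t)ᵀ * Xv t + (D1 t)ᵀ * Mv t * C1 t) *ᵥ xv t) +
              Wv t *ᵥ v t) ⬝ᵥ
           (((Wv t)ᵀ)⁻¹ *ᵥ (((B1 t)ᵀ * Xv t + (D1 t)ᵀ * Mv t * C1 t) *ᵥ xv t) +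
              Wv t *ᵥ v t) -
           (((Ww t)ᵀ)⁻¹ *ᵥ (((B2 t)ᵀ * Xw t + (D2 t)ᵀ * Mw t * C2 t) *ᵥ xw t) +
              Ww t *ᵥ w t) ⬝ᵥ
           (((Ww t)ᵀ)⁻¹ *ᵥ (((B2 t)ᵀ * Xw t + (D2 t)ᵀ * Mw t * C2 t) *ᵥ xw t) +
              Ww t *ᵥ w t))) := by
  
  intro v w xv xw hv hw hxv0 hxw0 hxvd hxwd
  obtain ⟨gv, hgvc, hgvint, hgv⟩ := single_filter hT A1 B1 C1 D1 hA1 hB1 hD1rank Mv hMvsym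
    hMvpd Xv Xv' hXvsym hXvderiv hXv'cont hXvT hXvRDE Wv hWv v xv hv hxv0 hxvd
  obtain ⟨gw, hgwc, hgwint, hgw⟩ := single_filter hT A2 B2 C2 D2 hA2 hB2 hD2rank Mw hMwsym
    hMwpd Xw Xw' hXwsym hXwderiv hXw'cont hXwT hXwRDE Ww hWw w xw hw hxw0 hxwd
  have huIcc : uIcc (0:ℝ) T = Icc 0 T := uIcc_of_le hT.le
  have hxvc : ∀ i, ContinuousOn (fun t => xv t i) (Icc 0 T) :=
    fun i t ht => ((hxvd t ht i).continuousAt).continuousWithinAt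
  have hxwc : ∀ i, ContinuousOn (fun t => xw t i) (Icc 0 T) :=
    fun i t ht => ((hxwd t ht i).continuousAt).continuousWithinAt
  have hzvc : ∀ i, ContinuousOn (fun t => (C1 t *ᵥ xv t + D1 t *ᵥ v t) i) (Icc 0 T) := by
    intro i
    have h : (fun t => (C1 t *ᵥ xv t + D1 t *ᵥ v t) i)
        = fun t => (C1 t *ᵥ xv t) i + (D1 t *ᵥ v t) i := by funext t; simp
    rw [h]; exact (contOn_mulVec hC1 hxvc i).add (contOn_mulVec hD1 hv i)
  have hzwc : ∀ i, ContinuousOn (fun t => (C2 t *ᵥ xw t + D2 t *ᵥ w t) i) (Icc 0 T) := by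
    intro i
    have h : (fun t => (C2 t *ᵥ xw t + D2 t *ᵥ w t) i)
        = fun t => (C2 t *ᵥ xw t) i + (D2 t *ᵥ w t) i := by funext t; simp
    rw [h]; exact (contOn_mulVec hC2 hxwc i).add (contOn_mulVec hD2 hw i)
  have hfvc : ContinuousOn (fun t => (C1 t *ᵥ xv t + D1 t *ᵥ v t) ⬝ᵥ (Mv t *ᵥ (C1 t *ᵥ xv t + D1 t *ᵥ v t))) (Icc 0 T) :=
    contOn_dot hzvc (contOn_mulVec hMvcont hzvc)
  have hfwc : ContinuousOn (fun t => (C2 t *ᵥ xw t + D2 t *ᵥ w t) ⬝ᵥ (Mw t *ᵥ (C2 t *ᵥ xw t + D2 t *ᵥ w t))) (Icc 0 T) :=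
    contOn_dot hzwc (contOn_mulVec hMwcont hzwc)
  have hfvI : IntervalIntegrable (fun t => (C1 t *ᵥ xv t + D1 t *ᵥ v t) ⬝ᵥ (Mv t *ᵥ (C1 t *ᵥ xv t + D1 t *ᵥ v t))) MeasureTheory.volume 0 T :=
    ContinuousOn.intervalIntegrable (by rw [huIcc]; exact hfvc)
  have hfwI : IntervalIntegrable (fun t => (C2 t *ᵥ xw t + D2 t *ᵥ w t) ⬝ᵥ (Mw t *ᵥ (C2 t *ᵥ xw t + D2 t *ᵥ w t))) MeasureTheory.volume 0 T :=
    ContinuousOn.intervalIntegrable (by rw [huIcc]; exact hfwc)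
  have hgvI : IntervalIntegrable gv MeasureTheory.volume 0 T :=
    ContinuousOn.intervalIntegrable (by rw [huIcc]; exact hgvc)
  have hgwI : IntervalIntegrable gw MeasureTheory.volume 0 T :=
    ContinuousOn.intervalIntegrable (by rw [huIcc]; exact hgwc)
  have key : (∫ t in (0:ℝ)..T, ((C1 t *ᵥ xv t + D1 t *ᵥ v t) ⬝ᵥ (Mv t *ᵥ (C1 t *ᵥ xv t + D1 t *ᵥ v t)) - (C2 t *ᵥ xw t + D2 t *ᵥ w t) ⬝ᵥ (Mw t *ᵥ (C2 t *ᵥ xw t + D2 t *ᵥ w t))))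
      = ∫ t in (0:ℝ)..T, ((((Wv t)ᵀ)⁻¹ *ᵥ (((B1 t)ᵀ * Xv t + (D1 t)ᵀ * Mv t * C1 t) *ᵥ xv t) + Wv t *ᵥ v t) ⬝ᵥ (((Wv t)ᵀ)⁻¹ *ᵥ (((B1 t)ᵀ * Xv t + (D1 t)ᵀ * Mv t * C1 t) *ᵥ xv t) + Wv t *ᵥ v t) - (((Ww t)ᵀ)⁻¹ *ᵥ (((B2 t)ᵀ * Xw t + (D2 t)ᵀ * Mw t * C2 t) *ᵥ xw t) + Ww t *ᵥ w t) ⬝ᵥ (((Ww t)ᵀ)⁻¹ *ᵥ (((B2 t)ᵀ * Xw t + (D2 t)ᵀ * Mw t * C2 t) *ᵥ xw t) + Ww t *ᵥ w t)) := by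
    have e1 : (∫ t in (0:ℝ)..T, ((((Wv t)ᵀ)⁻¹ *ᵥ (((B1 t)ᵀ * Xv t + (D1 t)ᵀ * Mv t * C1 t) *ᵥ xv t) + Wv t *ᵥ v t) ⬝ᵥ (((Wv t)ᵀ)⁻¹ *ᵥ (((B1 t)ᵀ * Xv t + (D1 t)ᵀ * Mv t * C1 t) *ᵥ xv t) + Wv t *ᵥ v t) - (((Ww t)ᵀ)⁻¹ *ᵥ (((B2 t)ᵀ * Xw t + (D2 t)ᵀ * Mw t * C2 t) *ᵥ xw t) + Ww t *ᵥ w t) ⬝ᵥ (((Ww t)ᵀ)⁻¹ *ᵥ (((B2 t)ᵀ * Xw t + (D2 t)ᵀ * Mw t * C2 t) *ᵥ xw t) + Ww t *ᵥ w t)))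
        = ∫ t in (0:ℝ)..T, (((C1 t *ᵥ xv t + D1 t *ᵥ v t) ⬝ᵥ (Mv t *ᵥ (C1 t *ᵥ xv t + D1 t *ᵥ v t)) + gv t) - ((C2 t *ᵥ xw t + D2 t *ᵥ w t) ⬝ᵥ (Mw t *ᵥ (C2 t *ᵥ xw t + D2 t *ᵥ w t)) + gw t)) := by
      apply intervalIntegral.integral_congr
      rw [huIcc]
      intro t ht
      simp only
      rw [hgv t ht, hgw t ht]
    rw [e1, intervalIntegral.integral_sub (hfvI.add hgvI) (hfwI.add hgwI),
      intervalIntegral.integral_add hfvI hgvI, intervalIntegral.integral_add hfwI hgwI,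
      intervalIntegral.integral_sub hfvI hfwI, hgvint, hgwint]
    ring
  exact ⟨key, fun h => key ▸ h⟩
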